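/- Every rule on {x,y} over agents partitioned into A and D that is strategy-proof and type-anonymous is a double-quota majority method: there exists a finite antichain Q ⊆ ℕ² of double-quotas such that the rule selects x at a profile iff (|supporters of x in A|, |supporters of x in D|) componentwise dominates some element of Q. -/
import Mathlib

def countT {n : ℕ} (v : Fin n → Bool) : ℕ :=
  (Finset.univ.filter fun i => v i = true).card

-- permutation lemma
lemma exists_perm {n : ℕ} (v v' : Fin n → Bool) (h : countT v = countT v') :
    ∃ σ : Equiv.Perm (Fin n), v ∘ σ = v' := by
  have hc : Fintype.card {i : Fin n // v' i = true} = Fintype.card {i : Fin n // v i = true} := by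
    rw [Fintype.card_subtype, Fintype.card_subtype]; exact h.symm
  have hc' : Fintype.card {i : Fin n // ¬ (v' i = true)} =
      Fintype.card {i : Fin n // ¬ (v i = true)} := by
    rw [Fintype.card_subtype_compl, Fintype.card_subtype_compl, hc]
  let e1 := Fintype.equivOfCardEq hc
  let e2 := Fintype.equivOfCardEq hc'
  refine ⟨Equiv.subtypeCongr e1 e2, funext fun i => ?_⟩
  by_cases hi : v' i = true
  · have : Equiv.subtypeCongr e1 e2 i = (e1 ⟨i, hi⟩ : Fin n) := by
      simp [Equiv.subtypeCongr, hi]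
    simp only [Function.comp_apply, this]
    rw [(e1 ⟨i, hi⟩).2, hi]
  · have : Equiv.subtypeCongr e1 e2 i = (e2 ⟨i, hi⟩ : Fin n) := by
      simp [Equiv.subtypeCongr, hi]
    simp only [Function.comp_apply, this]
    have h2 := (e2 ⟨i, hi⟩).2
    simp only [Bool.not_eq_true] at h2 hi
    rw [h2, hi]

lemma countT_canon {n : ℕ} (a : ℕ) (ha : a ≤ n) :
    countT (fun i : Fin n => decide (i.val < a)) = a := by
  unfold countT
  rw [← Finset.card_range a]
  apply Finset.card_bij (fun i _ => i.val)
  · intro i hi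
    simp only [Finset.mem_filter, decide_eq_true_eq] at hi
    simpa using hi.2
  · intro i _ j _ hij; exact Fin.val_injective hij
  · intro m hm
    simp only [Finset.mem_range] at hm
    exact ⟨⟨m, lt_of_lt_of_le hm ha⟩, by simp [hm], rfl⟩

theorem stmt17 (nA nD : ℕ) (f : (Fin nA → Bool) → (Fin nD → Bool) → Bool)
    (hspA : ∀ (vA : Fin nA → Bool) (vD : Fin nD → Bool) (i : Fin nA),
      f (Function.update vA i (!(vA i))) vD = vA i → f vA vD = vA i)
    (hspD : ∀ (vA : Fin nA → Bool) (vD : Fin nD → Bool) (j : Fin nD),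
      f vA (Function.update vD j (!(vD j))) = vD j → f vA vD = vD j)
    (hanon : ∀ (vA : Fin nA → Bool) (vD : Fin nD → Bool)
      (σA : Equiv.Perm (Fin nA)) (σD : Equiv.Perm (Fin nD)),
      f (vA ∘ σA) (vD ∘ σD) = f vA vD) :
    ∃ Q : Finset (ℕ × ℕ),
      (∀ q ∈ Q, ∀ q' ∈ Q, q.1 ≤ q'.1 → q.2 ≤ q'.2 → q = q') ∧
      ∀ vA vD, f vA vD = true ↔ ∃ q ∈ Q, q.1 ≤ countT vA ∧ q.2 ≤ countT vD := by
  -- f depends only on counts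
  have hcount : ∀ (vA vA' : Fin nA → Bool) (vD vD' : Fin nD → Bool),
      countT vA = countT vA' → countT vD = countT vD' → f vA vD = f vA' vD' := by
    intro vA vA' vD vD' h1 h2
    obtain ⟨σA, hσA⟩ := exists_perm vA vA' h1
    obtain ⟨σD, hσD⟩ := exists_perm vD vD' h2
    rw [← hanon vA vD σA σD, hσA, hσD]
  -- flipping a voter to true preserves outcome true
  have flipA : ∀ (vA : Fin nA → Bool) (vD : Fin nD → Bool) (i : Fin nA),
      f vA vD = true → f (Function.update vA i true) vD = true := by
    intro vA vD i hf
    by_cases hi : vA i = true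
    · have hupd : Function.update vA i true = vA := by
        rw [← hi]; exact Function.update_eq_self i vA
      rwa [hupd]
    · simp only [Bool.not_eq_true] at hi
      have := hspA (Function.update vA i true) vD i
      simp only [Function.update_self, Function.update_idem, Bool.not_true] at this
      have hupd : Function.update vA i false = vA := by
        rw [← hi]; exact Function.update_eq_self i vA
      rw [hupd] at this
      exact this hf
  have flipD : ∀ (vA : Fin nA → Bool) (vD : Fin nD → Bool) (j : Fin nD),
      f vA vD = true → f vA (Function.update vD j true) = true := by
    intro vA vD j hf
    by_cases hj : vD j = true
    · have hupd : Function.update vD j true = vD := by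
        rw [← hj]; exact Function.update_eq_self j vD
      rwa [hupd]
    · simp only [Bool.not_eq_true] at hj
      have := hspD vA (Function.update vD j true) j
      simp only [Function.update_self, Function.update_idem, Bool.not_true] at this
      have hupd : Function.update vD j false = vD := by
        rw [← hj]; exact Function.update_eq_self j vD
      rw [hupd] at this
      exact this hf
  set g : ℕ → ℕ → Bool := fun a b =>
    f (fun i => decide (i.val < a)) (fun j => decide (j.val < b)) with hg
  have hfg : ∀ vA vD, f vA vD = g (countT vA) (countT vD) := by
    intro vA vD
    have h1 : countT vA ≤ nA := by
      simpa [countT] using Finset.card_filter_le Finset.univ (fun i => vA i = true)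
    have h2 : countT vD ≤ nD := by
      simpa [countT] using Finset.card_filter_le Finset.univ (fun j => vD j = true)
    exact hcount _ _ _ _ (by rw [countT_canon _ h1]) (by rw [countT_canon _ h2])
  -- monotonicity of g on [0,nA]×[0,nD]
  have gstepA : ∀ a b, a < nA → g a b = true → g (a+1) b = true := by
    intro a b ha hgab
    have : (fun i : Fin nA => decide (i.val < a + 1)) =
        Function.update (fun i : Fin nA => decide (i.val < a)) ⟨a, ha⟩ true := by
      funext i
      by_cases hi : i = ⟨a, ha⟩
      · subst hi; simp
      · rw [Function.update_of_ne hi]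
        have : i.val ≠ a := fun h => hi (Fin.ext h)
        simp only [decide_eq_decide]
        omega
    rw [hg]
    simp only
    rw [this]
    exact flipA _ _ _ hgab
  have gstepD : ∀ a b, b < nD → g a b = true → g a (b+1) = true := by
    intro a b hb hgab
    have : (fun j : Fin nD => decide (j.val < b + 1)) =
        Function.update (fun j : Fin nD => decide (j.val < b)) ⟨b, hb⟩ true := by
      funext j
      by_cases hj : j = ⟨b, hb⟩
      · subst hj; simp
      · rw [Function.update_of_ne hj]
        have : j.val ≠ b := fun h => hj (Fin.ext h)
        simp only [decide_eq_decide]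
        omega
    rw [hg]
    simp only
    rw [this]
    exact flipD _ _ _ hgab
  have gupA : ∀ k a b, a + k ≤ nA → g a b = true → g (a + k) b = true := by
    intro k
    induction k with
    | zero => intro a b _ h; simpa using h
    | succ n ih =>
      intro a b hle h
      have : a + (n + 1) = (a + n) + 1 := by omega
      rw [this]
      exact gstepA (a + n) b (by omega) (ih a b (by omega) h)
  have gmonoA : ∀ a a' b, a ≤ a' → a' ≤ nA → g a b = true → g a' b = true := by
    intro a a' b hle hle' h
    have := gupA (a' - a) a b (by omega) h
    rwa [Nat.add_sub_cancel' hle] at this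
  have gupD : ∀ k a b, b + k ≤ nD → g a b = true → g a (b + k) = true := by
    intro k
    induction k with
    | zero => intro a b _ h; simpa using h
    | succ n ih =>
      intro a b hle h
      have : b + (n + 1) = (b + n) + 1 := by omega
      rw [this]
      exact gstepD a (b + n) (by omega) (ih a b (by omega) h)
  have gmonoD : ∀ a b b', b ≤ b' → b' ≤ nD → g a b = true → g a b' = true := by
    intro a b b' hle hle' h
    have := gupD (b' - b) a b (by omega) h
    rwa [Nat.add_sub_cancel' hle] at this
  set S : Finset (ℕ × ℕ) :=
    (Finset.range (nA+1) ×ˢ Finset.range (nD+1)).filter (fun p => g p.1 p.2 = true) with hS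
  set Q : Finset (ℕ × ℕ) :=
    S.filter (fun q => ∀ q' ∈ S, q'.1 ≤ q.1 → q'.2 ≤ q.2 → q' = q) with hQ
  have hQS : Q ⊆ S := Finset.filter_subset _ _
  -- minimal element below any element of S
  have hmin0 : ∀ n, ∀ p ∈ S, p.1 + p.2 = n → ∃ q ∈ Q, q.1 ≤ p.1 ∧ q.2 ≤ p.2 := by
    intro n
    induction n using Nat.strong_induction_on with
    | _ n ih =>
      intro p hp hn
      by_cases hpmin : ∀ q' ∈ S, q'.1 ≤ p.1 → q'.2 ≤ p.2 → q' = p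
      · exact ⟨p, Finset.mem_filter.2 ⟨hp, hpmin⟩, le_refl _, le_refl _⟩
      · push_neg at hpmin
        obtain ⟨q', hq'S, h1, h2, hne⟩ := hpmin
        have hlt : q'.1 + q'.2 < n := by
          rcases Nat.lt_or_ge (q'.1 + q'.2) n with h | h
          · exact h
          · exfalso; apply hne
            have hh : q'.1 = p.1 ∧ q'.2 = p.2 := by omega
            exact Prod.ext hh.1 hh.2
        obtain ⟨q, hq, hq1, hq2⟩ := ih _ hlt q' hq'S rfl
        exact ⟨q, hq, le_trans hq1 h1, le_trans hq2 h2⟩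
  have hmin : ∀ p ∈ S, ∃ q ∈ Q, q.1 ≤ p.1 ∧ q.2 ≤ p.2 := fun p hp => hmin0 _ p hp rfl
  refine ⟨Q, ?_, ?_⟩
  · intro q hq q' hq' h1 h2
    exact (Finset.mem_filter.1 hq').2 q (hQS hq) h1 h2
  · intro vA vD
    have h1 : countT vA ≤ nA := by
      simpa [countT] using Finset.card_filter_le Finset.univ (fun i => vA i = true)
    have h2 : countT vD ≤ nD := by
      simpa [countT] using Finset.card_filter_le Finset.univ (fun j => vD j = true)
    constructor
    · intro hf
      have hmem : (countT vA, countT vD) ∈ S := by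
        rw [hS]
        refine Finset.mem_filter.2 ⟨?_, ?_⟩
        · simp [Finset.mem_product, Nat.lt_succ_iff, h1, h2]
        · rw [← hfg]; exact hf
      obtain ⟨q, hq, hq1, hq2⟩ := hmin _ hmem
      exact ⟨q, hq, hq1, hq2⟩
    · rintro ⟨q, hq, hq1, hq2⟩
      have hqS := hQS hq
      rw [hS, Finset.mem_filter] at hqS
      have : g q.1 (countT vD) = true := gmonoD q.1 q.2 _ hq2 h2 hqS.2
      have : g (countT vA) (countT vD) = true := gmonoA q.1 _ _ hq1 h1 this
      rw [hfg]; exact this
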